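/- Let z̃ : [0, ∞) → [0, ∞) be the function with z̃(0) = 0 and, for r > 0, z̃(r) equal to the unique z > 0 satisfying z(exp(z) − 1)/(exp(z) − z − 1) = 2 + r. Then the limit as r → 0+ of (1/r)·(−1 + z̃(r)⁴·exp(z̃(r))/((2 + r)²·(exp(z̃(r)) − z̃(r) − 1)²)) equals 0. (Equivalently: the function Φ̄_A(x̄, s̄) obtained from the drift Φ_A by the substitution x̄ = x/v, s̄ = s/v extends continuously to (0,0) with value 0 there, and its partial derivative with respect to s̄ at (0,0) vanishes.) -/

import Mathlib

open Real Filter Set Topology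

set_option maxHeartbeats 800000

lemma aux_one_sub (z : ℝ) : (1 - z) * Real.exp z ≤ 1 := by
  rcases le_or_gt (1 - z) 0 with h | h
  · nlinarith [Real.exp_pos z]
  · have h1 : 1 - z ≤ Real.exp (-z) := by
      have := Real.add_one_le_exp (-z); linarith
    have h2 := mul_le_mul_of_nonneg_right h1 (Real.exp_pos z).le
    rwa [← Real.exp_add, neg_add_cancel, Real.exp_zero] at h2

lemma phi''_nonneg (z : ℝ) : 0 ≤ 2*z*Real.exp z - 2*Real.exp z + 2 := by
  nlinarith [aux_one_sub z]

lemma phi'_hasDeriv (z : ℝ) :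
    HasDerivAt (fun z => 2*z*Real.exp z - 4*Real.exp z + 2*z + 4)
      (2*z*Real.exp z - 2*Real.exp z + 2) z := by
  have h1 : HasDerivAt (fun z : ℝ => 2*z) 2 z := by
    simpa using (hasDerivAt_id z).const_mul (2:ℝ)
  convert (h1.mul (Real.hasDerivAt_exp z)).sub
    (((Real.hasDerivAt_exp z).const_mul (4:ℝ)).sub (h1.add_const (4:ℝ))) using 1
  · ext x; ring
  · rfl
  · ext x; simp only [Pi.mul_apply, Pi.sub_apply]; ring
  · ring

lemma phi'_nonneg {z : ℝ} (hz : 0 ≤ z) : 0 ≤ 2*z*Real.exp z - 4*Real.exp z + 2*z + 4 := by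
  have hmono : Monotone (fun z => 2*z*Real.exp z - 4*Real.exp z + 2*z + 4) := by
    apply monotone_of_deriv_nonneg
    · exact fun x => (phi'_hasDeriv x).differentiableAt
    · intro x; rw [(phi'_hasDeriv x).deriv]; exact phi''_nonneg x
  have h0 : (fun z => 2*z*Real.exp z - 4*Real.exp z + 2*z + 4) 0 = 0 := by
    simp [Real.exp_zero]
  have := hmono hz
  rw [h0] at this
  simpa using this

lemma phi_hasDeriv (z : ℝ) :
    HasDerivAt (fun z => 2*z*Real.exp z + z^2 + 4*z - 6*Real.exp z + 6)
      (2*z*Real.exp z - 4*Real.exp z + 2*z + 4) z := by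
  have h1 : HasDerivAt (fun z : ℝ => 2*z) 2 z := by
    simpa using (hasDerivAt_id z).const_mul (2:ℝ)
  have hsq : HasDerivAt (fun z : ℝ => z^2) (2*z) z := by
    simpa using (hasDerivAt_pow 2 z)
  have h4 : HasDerivAt (fun z : ℝ => 4*z) 4 z := by
    simpa using (hasDerivAt_id z).const_mul (4:ℝ)
  convert ((((h1.mul (Real.hasDerivAt_exp z)).add hsq).add h4).sub
    ((Real.hasDerivAt_exp z).const_mul (6:ℝ))).add_const (6:ℝ) using 1
  · rfl
  · rfl
  · ext x; simp only [Pi.mul_apply, Pi.add_apply, Pi.sub_apply]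
  · ring

lemma phi_nonneg {z : ℝ} (hz : 0 ≤ z) :
    0 ≤ 2*z*Real.exp z + z^2 + 4*z - 6*Real.exp z + 6 := by
  have hmono : MonotoneOn (fun z => 2*z*Real.exp z + z^2 + 4*z - 6*Real.exp z + 6)
      (Set.Ici (0:ℝ)) := by
    apply monotoneOn_of_deriv_nonneg (convex_Ici 0)
    · exact (Continuous.continuousOn (by continuity))
    · exact fun x _ => ((phi_hasDeriv x).differentiableAt).differentiableWithinAt
    · intro x hx
      rw [(phi_hasDeriv x).deriv]
      rw [interior_Ici] at hx
      exact phi'_nonneg (le_of_lt hx)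
  have h0 : (fun z => 2*z*Real.exp z + z^2 + 4*z - 6*Real.exp z + 6) 0 = 0 := by
    simp [Real.exp_zero]
  have := hmono (Set.self_mem_Ici) hz hz
  rw [h0] at this
  simpa using this

lemma exp_poly_lower {z : ℝ} (hz : 0 ≤ z) :
    1 + z + z^2/2 + z^3/6 + z^4/24 ≤ Real.exp z := by
  have h := Real.sum_le_exp_of_nonneg hz 5
  simp [Finset.sum_range_succ, Nat.factorial] at h
  linarith

lemma exp_poly_upper {z : ℝ} (h0 : 0 ≤ z) (h1 : z ≤ 1) :
    Real.exp z ≤ 1 + z + z^2/2 + z^3/6 + 5*z^4/96 := by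
  have h := Real.exp_bound' h0 h1 (n := 4) (by norm_num)
  simp [Finset.sum_range_succ, Nat.factorial] at h
  norm_num at h
  linarith

lemma psi_upper {z : ℝ} (h0 : 0 ≤ z) (h1 : z ≤ 1) :
    (Real.exp z - 1)^2 - z^2 * Real.exp z ≤ z^4 := by
  have hL := exp_poly_lower h0
  have hU := exp_poly_upper h0 h1
  nlinarith [mul_nonneg (sub_nonneg.2 hL) (sub_nonneg.2 hU), sq_nonneg z, sq_nonneg (z*z),
    pow_le_one₀ h0 h1 (n := 2), pow_le_one₀ h0 h1 (n := 3), pow_le_one₀ h0 h1 (n := 4),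
    mul_nonneg h0 h0]

lemma psi_lower {z : ℝ} (h0 : 0 ≤ z) (h1 : z ≤ 1) :
    -(z^4) ≤ (Real.exp z - 1)^2 - z^2 * Real.exp z := by
  have hL := exp_poly_lower h0
  have hU := exp_poly_upper h0 h1
  nlinarith [mul_nonneg (sub_nonneg.2 hL) (sub_nonneg.2 hU), sq_nonneg z, sq_nonneg (z*z),
    pow_le_one₀ h0 h1 (n := 2), pow_le_one₀ h0 h1 (n := 3), pow_le_one₀ h0 h1 (n := 4),
    mul_nonneg h0 h0]

/-- Let `z̃ : [0,∞) → [0,∞)` be the function with `z̃ 0 = 0` and, for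
`r > 0`, `z̃ r` the unique `z > 0` with `z (exp z - 1)/(exp z - z - 1) = 2 + r`. Then
`(1/r) (-1 + z̃(r)⁴ exp(z̃ r) / ((2+r)² (exp(z̃ r) - z̃ r - 1)²)) → 0` as `r → 0⁺`. -/
theorem karpSipser_rescaled_drift_partial_vanishes (ztilde : ℝ → ℝ) (h0 : ztilde 0 = 0)
    (hz : ∀ r : ℝ, 0 < r → 0 < ztilde r ∧
      ztilde r * (Real.exp (ztilde r) - 1) / (Real.exp (ztilde r) - ztilde r - 1) = 2 + r) :
    Filter.Tendsto
      (fun r : ℝ =>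
        1 / r *
          (-1 + (ztilde r) ^ 4 * Real.exp (ztilde r) /
            ((2 + r) ^ 2 * (Real.exp (ztilde r) - ztilde r - 1) ^ 2)))
      (𝓝[>] (0 : ℝ)) (𝓝 0) := by
  have hg : Tendsto (fun r : ℝ => -(9*r)) (𝓝[>] (0:ℝ)) (𝓝 0) := by
    have h : Tendsto (fun r : ℝ => -(9*r)) (𝓝 (0:ℝ)) (𝓝 (-(9*0))) :=
      ((continuous_const.mul continuous_id).neg).tendsto 0
    simpa using h.mono_left nhdsWithin_le_nhds
  have hh : Tendsto (fun r : ℝ => 9*r) (𝓝[>] (0:ℝ)) (𝓝 0) := by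
    have h : Tendsto (fun r : ℝ => 9*r) (𝓝 (0:ℝ)) (𝓝 (9*0)) :=
      (continuous_const.mul continuous_id).tendsto 0
    simpa using h.mono_left nhdsWithin_le_nhds
  have hbound : ∀ r : ℝ, r ∈ Set.Ioo (0:ℝ) (1/3) →
      -(9*r) ≤ (1 / r *
          (-1 + (ztilde r) ^ 4 * Real.exp (ztilde r) /
            ((2 + r) ^ 2 * (Real.exp (ztilde r) - ztilde r - 1) ^ 2))) ∧
      (1 / r *
          (-1 + (ztilde r) ^ 4 * Real.exp (ztilde r) /
            ((2 + r) ^ 2 * (Real.exp (ztilde r) - ztilde r - 1) ^ 2))) ≤ 9*r := by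
    intro r hr
    obtain ⟨hr0, hr13⟩ := hr
    obtain ⟨hzpos, heq⟩ := hz r hr0
    set z := ztilde r with hzdef
    have hD : 0 < Real.exp z - z - 1 := by
      have := Real.add_one_lt_exp (ne_of_gt hzpos); linarith
    have key : z * (Real.exp z - 1) = (2 + r) * (Real.exp z - z - 1) := by
      field_simp at heq; linarith [heq]
    have hphi := phi_nonneg hzpos.le
    have h3r : z ≤ 3*r := by
      by_contra hc
      push_neg at hc
      nlinarith [mul_pos (sub_pos.2 hc) hD]
    have hz1 : z ≤ 1 := by linarith
    have hw : 0 < Real.exp z - 1 := by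
      have := Real.add_one_lt_exp (ne_of_gt hzpos); linarith
    have hwz : z ≤ Real.exp z - 1 := by
      have := Real.add_one_le_exp z; linarith
    -- rewrite the bracket
    have hsq : (2 + r) ^ 2 * (Real.exp z - z - 1) ^ 2 = (z * (Real.exp z - 1))^2 := by
      linear_combination (-(z * (Real.exp z - 1) + (2 + r) * (Real.exp z - z - 1))) * key
    have hX : -1 + z ^ 4 * Real.exp z /
        ((2 + r) ^ 2 * (Real.exp z - z - 1) ^ 2)
        = (z^2 * Real.exp z - (Real.exp z - 1)^2) / (Real.exp z - 1)^2 := by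
      rw [hsq]
      field_simp
      ring
    have hnum_up : z^2 * Real.exp z - (Real.exp z - 1)^2 ≤ z^4 :=
      by nlinarith [psi_lower hzpos.le hz1]
    have hnum_lo : -(z^4) ≤ z^2 * Real.exp z - (Real.exp z - 1)^2 :=
      by nlinarith [psi_upper hzpos.le hz1]
    have hz2 : z^2 ≤ 9*r^2 := by nlinarith
    have hw2 : z^2 ≤ (Real.exp z - 1)^2 := by nlinarith
    have hz4 : z^4 ≤ 9*r^2 * (Real.exp z - 1)^2 := by
      nlinarith [mul_le_mul hz2 hw2 (sq_nonneg z) (by positivity : (0:ℝ) ≤ 9*r^2)]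
    have hXup : (z^2 * Real.exp z - (Real.exp z - 1)^2) / (Real.exp z - 1)^2 ≤ 9*r^2 := by
      rw [div_le_iff₀ (by positivity)]
      linarith
    have hXlo : -(9*r^2) ≤ (z^2 * Real.exp z - (Real.exp z - 1)^2) / (Real.exp z - 1)^2 := by
      rw [le_div_iff₀ (by positivity)]
      linarith
    rw [hX]
    constructor
    · have := mul_le_mul_of_nonneg_left hXlo (le_of_lt (one_div_pos.2 hr0))
      have he : 1/r * (-(9*r^2)) = -(9*r) := by field_simp
      rw [he] at this
      linarith
    · have := mul_le_mul_of_nonneg_left hXup (le_of_lt (one_div_pos.2 hr0))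
      have he : 1/r * (9*r^2) = 9*r := by field_simp
      rw [he] at this
      linarith
  refine tendsto_of_tendsto_of_tendsto_of_le_of_le' hg hh ?_ ?_ <;>
  · filter_upwards [Ioo_mem_nhdsGT_of_mem (Set.left_mem_Ico.2 (by norm_num : (0:ℝ) < 1/3))]
      with r hr
    first
    | exact (hbound r hr).1
    | exact (hbound r hr).2
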